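/- Let (B, W, E, b, w) be a finite bipartite multigraph with B and W nonempty which satisfies the strong marriage condition. Then the multigraph is non-degenerate: every edge e ∈ E belongs to some perfect matching. -/

import Mathlib

open Finset
open scoped Classical

/-- A perfect matching in a finite bipartite multigraph with black vertices `B`,
white vertices `W`, edges `E` and endpoint maps `b : E → B`, `w : E → W`:
a set of edges `D` such that every black vertex and every white vertex is
incident to exactly one edge of `D`. -/
def IsPerfectMatching {B W E : Type*} (b : E → B) (w : E → W) (D : Finset E) : Prop :=
  (∀ v : B, ∃! e : E, e ∈ D ∧ b e = v) ∧ (∀ v : W, ∃! e : E, e ∈ D ∧ w e = v)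

/-- The strong marriage condition (every nonempty proper subset of black vertices is
joined to strictly more white vertices, and vice versa) implies non-degeneracy:
every edge belongs to some perfect matching. -/
theorem nondegenerate_of_strong_marriage
    {B W E : Type*} [Fintype B] [Fintype W] [Fintype E]
    [Nonempty B] [Nonempty W]
    (b : E → B) (w : E → W)
    (hB : ∀ S : Finset B, S.Nonempty → S ≠ univ →
      S.card < (univ.filter (fun y : W => ∃ e : E, b e ∈ S ∧ w e = y)).card)
    (hW : ∀ S : Finset W, S.Nonempty → S ≠ univ →
      S.card < (univ.filter (fun x : B => ∃ e : E, w e ∈ S ∧ b e = x)).card) :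
    ∀ e : E, ∃ D : Finset E, IsPerfectMatching b w D ∧ e ∈ D := by
  intro e
  set x0 := b e with hx0
  set y0 := w e with hy0
  -- card W ≤ card B
  have hcard : Fintype.card W ≤ Fintype.card B := by
    by_cases h1 : Fintype.card W ≤ 1
    · exact h1.trans Fintype.card_pos
    · push_neg at h1
      have hmem : y0 ∉ (univ.erase y0 : Finset W) := notMem_erase _ _
      have hne : ((univ : Finset W).erase y0).Nonempty := by
        rw [← Finset.card_pos, Finset.card_erase_of_mem (mem_univ _), Finset.card_univ]
        omega
      have hprop : ((univ : Finset W).erase y0) ≠ univ := by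
        intro h
        rw [h] at hmem
        exact hmem (mem_univ y0)
      have := hW _ hne hprop
      have hle : (univ.filter (fun x : B =>
          ∃ e : E, w e ∈ (univ : Finset W).erase y0 ∧ b e = x)).card ≤ Fintype.card B := by
        exact (Finset.card_filter_le _ _).trans (le_of_eq (Finset.card_univ))
      rw [Finset.card_erase_of_mem (mem_univ _), Finset.card_univ] at this
      omega
  -- the target sets for Hall's theorem
  set t : B → Finset W := fun x =>
    if x = x0 then {y0} else univ.filter (fun y => y ≠ y0 ∧ ∃ e', b e' = x ∧ w e' = y)
    with ht
  have key : ∀ s : Finset B, x0 ∉ s → s.card ≤ (s.biUnion t).card := by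
    intro s hs
    rcases s.eq_empty_or_nonempty with rfl | hsne
    · simp
    · have hprop : s ≠ univ := fun h => hs (h ▸ mem_univ x0)
      have h1 := hB s hsne hprop
      have h2 : univ.filter (fun y : W => ∃ e : E, b e ∈ s ∧ w e = y) ⊆
          insert y0 (s.biUnion t) := by
        intro y hy
        simp only [mem_filter, mem_univ, true_and] at hy
        obtain ⟨e', he1, he2⟩ := hy
        by_cases hyy : y = y0
        · exact mem_insert.2 (Or.inl hyy)
        · refine mem_insert.2 (Or.inr (mem_biUnion.2 ⟨b e', he1, ?_⟩))
          have hbx : b e' ≠ x0 := fun h => hs (h ▸ he1)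
          simp only [ht, if_neg hbx, mem_filter, mem_univ, true_and]
          exact ⟨hyy, e', rfl, he2⟩
      have h3 := (Finset.card_le_card h2).trans (Finset.card_insert_le _ _)
      omega
  have hall : ∀ s : Finset B, s.card ≤ (s.biUnion t).card := by
    intro s
    by_cases hx : x0 ∈ s
    · set s' := s.erase x0 with hs'
      have h1 := key s' (notMem_erase _ _)
      have h2 : insert y0 (s'.biUnion t) ⊆ s.biUnion t := by
        intro y hy
        rcases mem_insert.1 hy with rfl | hy
        · exact mem_biUnion.2 ⟨x0, hx, by simp [ht]⟩
        · exact biUnion_subset_biUnion_of_subset_left t (erase_subset _ _) hy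
      have h3 : y0 ∉ s'.biUnion t := by
        simp only [mem_biUnion, not_exists, not_and]
        intro x hxs hmem
        have hxx : x ≠ x0 := ne_of_mem_erase hxs
        simp [ht, hxx] at hmem
      have h4 := Finset.card_le_card h2
      rw [Finset.card_insert_of_notMem h3] at h4
      have h5 : s'.card = s.card - 1 := Finset.card_erase_of_mem hx
      have h6 : 1 ≤ s.card := Finset.card_pos.2 ⟨x0, hx⟩
      omega
    · exact key s hx
  obtain ⟨f, hfinj, hft⟩ := (Finset.all_card_le_biUnion_card_iff_exists_injective t).1 hall
  have hf0 : f x0 = y0 := by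
    have := hft x0
    simpa [ht] using this
  have hfbij : Function.Bijective f := by
    rw [Fintype.bijective_iff_injective_and_card]
    exact ⟨hfinj, le_antisymm (Fintype.card_le_of_injective f hfinj) hcard⟩
  have hg : ∀ x : B, ∃ e', b e' = x ∧ w e' = f x := by
    intro x
    by_cases hx : x = x0
    · subst hx
      exact ⟨e, rfl, by rw [hf0]⟩
    · have := hft x
      simp only [ht, if_neg hx, mem_filter, mem_univ, true_and] at this
      exact this.2
  choose g hgb hgw using hg
  set g' : B → E := fun x => if x = x0 then e else g x with hg'
  have hb' : ∀ x, b (g' x) = x := by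
    intro x
    by_cases hx : x = x0
    · subst hx; simp [hg', hx0]
    · simp [hg', hx, hgb]
  have hw' : ∀ x, w (g' x) = f x := by
    intro x
    by_cases hx : x = x0
    · subst hx; simp [hg', hf0, hy0]
    · simp [hg', hx, hgw]
  refine ⟨univ.image g', ⟨?_, ?_⟩, ?_⟩
  · intro v
    refine ⟨g' v, ⟨mem_image_of_mem _ (mem_univ v), hb' v⟩, ?_⟩
    rintro e' ⟨he'D, he'b⟩
    obtain ⟨x, -, rfl⟩ := mem_image.1 he'D
    rw [hb' x] at he'b
    rw [he'b]
  · intro v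
    obtain ⟨x, rfl⟩ := hfbij.surjective v
    refine ⟨g' x, ⟨mem_image_of_mem _ (mem_univ x), hw' x⟩, ?_⟩
    rintro e' ⟨he'D, he'w⟩
    obtain ⟨x', -, rfl⟩ := mem_image.1 he'D
    rw [hw' x'] at he'w
    rw [hfinj he'w]
  · have : g' x0 = e := by simp [hg']
    exact this ▸ mem_image_of_mem _ (mem_univ x0)
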